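/- Let Γ be a strongly connected oriented graph (every vertex reachable from every other by a directed path) with dim H_1(Γ,ℝ) ≥ 2. Then Γ contains either (a) two directed circuits meeting at exactly one common vertex, or (b) two distinct vertices u, w together with three paths between them, pairwise disjoint except at u and w, one directed from w to u and two directed from u to w. -/

import Mathlib

open scoped RealInnerProductSpace
open Classical

structure Digraph' (V E : Type) where
  s : E → V
  t : E → V

namespace Digraph'

variable {V E : Type} [Fintype V] [Fintype E] [DecidableEq V] [DecidableEq E]

/-- boundary map ∂ : C₁ → C₀, ∂e = source e − target e -/
noncomputable def bd (G : Digraph' V E) :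
    EuclideanSpace ℝ E →ₗ[ℝ] EuclideanSpace ℝ V :=
  Matrix.toEuclideanLin (Matrix.of fun v e =>
    (if G.s e = v then (1:ℝ) else 0) - (if G.t e = v then (1:ℝ) else 0))

/-- coboundary map δ : C₀ → C₁ -/
noncomputable def cobd (G : Digraph' V E) :
    EuclideanSpace ℝ V →ₗ[ℝ] EuclideanSpace ℝ E :=
  Matrix.toEuclideanLin (Matrix.of fun e v =>
    (if G.s e = v then (1:ℝ) else 0) - (if G.t e = v then (1:ℝ) else 0))

/-- orthogonal projection onto H₁(Γ,ℝ) = ker ∂, valued in the ambient space -/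
noncomputable def proj (G : Digraph' V E) (x : EuclideanSpace ℝ E) : EuclideanSpace ℝ E :=
  (Submodule.orthogonalProjectionOnto (LinearMap.ker (bd G)) x : EuclideanSpace ℝ E)

/-- reachability using only edges in S (edges traversable both ways) -/
def Reach (G : Digraph' V E) (S : Set E) : V → V → Prop :=
  Relation.ReflTransGen (fun a b => ∃ e ∈ S, (G.s e = a ∧ G.t e = b) ∨ (G.s e = b ∧ G.t e = a))

def Connected (G : Digraph' V E) : Prop := ∀ a b : V, Reach G Set.univ a b

/-- an edge is a bridge if its removal disconnects the graph -/
def IsBridge (G : Digraph' V E) (e : E) : Prop := ¬ ∀ a b : V, Reach G {e}ᶜ a b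

def Bridgeless (G : Digraph' V E) : Prop := ∀ e : E, ¬ IsBridge G e

/-- directed reachability -/
def DirReach (G : Digraph' V E) : V → V → Prop :=
  Relation.ReflTransGen (fun a b => ∃ e, G.s e = a ∧ G.t e = b)

def StronglyConnected (G : Digraph' V E) : Prop := ∀ a b : V, DirReach G a b

/-- a step of a walk: an edge with a direction of traversal (`true` = forward) -/
def stepSource (G : Digraph' V E) (st : E × Bool) : V := if st.2 then G.s st.1 else G.t st.1
def stepTarget (G : Digraph' V E) (st : E × Bool) : V := if st.2 then G.t st.1 else G.s st.1

/-- `IsWalk G u l v` : `l` is a walk from `u` to `v` -/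
def IsWalk (G : Digraph' V E) : V → List (E × Bool) → V → Prop
  | u, [], w => u = w
  | u, st :: rest, w => stepSource G st = u ∧ IsWalk G (stepTarget G st) rest w

/-- a path: a walk with all vertices distinct -/
def IsPath (G : Digraph' V E) (u : V) (l : List (E × Bool)) (v : V) : Prop :=
  IsWalk G u l v ∧ (u :: l.map (stepTarget G)).Nodup

/-- a circuit at u: a nonempty closed walk with distinct vertices and distinct edges -/
def IsCircuit (G : Digraph' V E) (u : V) (l : List (E × Bool)) : Prop :=
  l ≠ [] ∧ IsWalk G u l u ∧ (l.map (stepTarget G)).Nodup ∧ (l.map Prod.fst).Nodup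

/-- directed walk -/
def IsDirWalk (G : Digraph' V E) : V → List E → V → Prop
  | u, [], w => u = w
  | u, e :: rest, w => G.s e = u ∧ IsDirWalk G (G.t e) rest w

def IsDirPath (G : Digraph' V E) (u : V) (l : List E) (v : V) : Prop :=
  IsDirWalk G u l v ∧ (u :: l.map G.t).Nodup

/-- directed circuit at u -/
def IsDirCircuit (G : Digraph' V E) (u : V) (l : List E) : Prop :=
  l ≠ [] ∧ IsDirWalk G u l u ∧ (l.map G.t).Nodup ∧ l.Nodup

/-- signed edge-sum λ(w) ∈ C₁ of a walk -/
noncomputable def lam (_G : Digraph' V E) (l : List (E × Bool)) : EuclideanSpace ℝ E :=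
  (l.map fun st => (if st.2 then (1:ℝ) else -1) • EuclideanSpace.single st.1 (1:ℝ)).sum

/-- edge-sum λ(p) of a directed walk -/
noncomputable def dirlam (_G : Digraph' V E) (l : List E) : EuclideanSpace ℝ E :=
  (l.map fun e => EuclideanSpace.single e (1:ℝ)).sum

/-- a graph-theoretical cycle: an integral 1-cycle with coefficients in {0, ±1} -/
def IsCycle (G : Digraph' V E) (γ : EuclideanSpace ℝ E) : Prop :=
  bd G γ = 0 ∧ ∀ j, γ j = 0 ∨ γ j = 1 ∨ γ j = -1

/-- an elementary cycle -/
def Elementary (G : Digraph' V E) (γ : EuclideanSpace ℝ E) : Prop :=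
  IsCycle G γ ∧ γ ≠ 0 ∧
    ¬ ∃ γ₁ γ₂, IsCycle G γ₁ ∧ IsCycle G γ₂ ∧ γ₁ ≠ 0 ∧ γ₂ ≠ 0 ∧
      (∀ j, γ₁ j = 0 ∨ γ₂ j = 0) ∧ γ = γ₁ + γ₂

noncomputable def plusSet (_G : Digraph' V E) (γ : EuclideanSpace ℝ E) : Finset E :=
  Finset.univ.filter fun j => γ j = 1

noncomputable def minusSet (_G : Digraph' V E) (γ : EuclideanSpace ℝ E) : Finset E :=
  Finset.univ.filter fun j => γ j = -1

end Digraph'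


namespace Digraph'

variable {V E : Type} [Fintype V] [Fintype E] [DecidableEq V] [DecidableEq E]
  {G : Digraph' V E}

lemma walk_append {a b c : V} {l m : List E} (h1 : IsDirWalk G a l b)
    (h2 : IsDirWalk G b m c) : IsDirWalk G a (l ++ m) c := by
  induction l generalizing a with
  | nil => have : a = b := h1; subst this; exact h2
  | cons f rest ih =>
    obtain ⟨hs, hw⟩ := h1
    exact ⟨hs, ih hw⟩

lemma walk_split {l m : List E} {a c : V} (h : IsDirWalk G a (l ++ m) c) :
    ∃ b, IsDirWalk G a l b ∧ IsDirWalk G b m c := by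
  induction l generalizing a with
  | nil => exact ⟨a, rfl, h⟩
  | cons f rest ih =>
    obtain ⟨hs, hw⟩ := h
    obtain ⟨b, h1, h2⟩ := ih hw
    exact ⟨b, ⟨hs, h1⟩, h2⟩

lemma dirReach_walk {a b : V} (h : DirReach G a b) : ∃ l, IsDirWalk G a l b := by
  induction h with
  | refl => exact ⟨[], rfl⟩
  | tail _ hstep ih =>
    obtain ⟨l, hl⟩ := ih
    obtain ⟨e, hs, ht⟩ := hstep
    exact ⟨l ++ [e], walk_append hl ⟨hs, ht⟩⟩

lemma walk_src_mem_dropLast {a b : V} {l : List E} (h : IsDirWalk G a l b) {g : E}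
    (hg : g ∈ l) : G.s g ∈ (a :: l.map G.t).dropLast := by
  induction l generalizing a with
  | nil => cases hg
  | cons f rest ih =>
    obtain ⟨hs, hw⟩ := h
    rw [List.map_cons, List.dropLast_cons₂]
    rcases List.mem_cons.1 hg with rfl | hg
    · exact hs ▸ List.mem_cons_self
    · exact List.mem_cons_of_mem _ (ih hw hg)

lemma walk_src_mem {a b : V} {l : List E} (h : IsDirWalk G a l b) {g : E}
    (hg : g ∈ l) : G.s g ∈ a :: l.map G.t :=
  (List.dropLast_sublist _).subset (walk_src_mem_dropLast h hg)

lemma walk_tlist_eq {a b : V} {l : List E} (h : IsDirWalk G a l b) (hne : l ≠ []) :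
    l.map G.t = (l.map G.t).dropLast ++ [b] := by
  induction l generalizing a with
  | nil => exact absurd rfl hne
  | cons f rest ih =>
    obtain ⟨hs, hw⟩ := h
    by_cases hr : rest = []
    · subst hr
      have : G.t f = b := hw
      simp [this]
    · have hi := ih hw hr
      obtain ⟨z, zs, hz⟩ := List.exists_cons_of_ne_nil (l := rest.map G.t)
        (by simpa using hr)
      rw [List.map_cons, hz, List.dropLast_cons₂, List.cons_append]
      rw [hz] at hi
      exact congrArg _ hi

lemma walk_to_path : ∀ {l : List E} {a b : V}, IsDirWalk G a l b →
    ∃ p, p.Sublist l ∧ IsDirWalk G a p b ∧ (a :: p.map G.t).Nodup := by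
  intro l
  induction l with
  | nil => exact fun h => ⟨[], List.Sublist.refl _, h, by simp⟩
  | cons f rest ih =>
    intro a b h
    obtain ⟨hs, hw⟩ := h
    obtain ⟨p, hsub, hwp, hnd⟩ := ih hw
    by_cases ha : a ∈ G.t f :: p.map G.t
    · rcases List.mem_cons.1 ha with ha | ha
      · exact ⟨p, hsub.trans (List.sublist_cons_self f rest), ha ▸ hwp, ha ▸ hnd⟩
      · obtain ⟨g, hgp, hga⟩ := List.mem_map.1 ha
        obtain ⟨p₁, p₂, rfl⟩ := List.append_of_mem hgp
        obtain ⟨m, _, hm2⟩ := walk_split hwp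
        obtain ⟨_, hw2⟩ := hm2
        refine ⟨p₂, ?_, hga ▸ hw2, ?_⟩
        · exact (((List.sublist_cons_self g p₂).trans
            (List.sublist_append_right p₁ _)).trans hsub).trans
            (List.sublist_cons_self f rest)
        · have h2 : (G.t g :: p₂.map G.t).Nodup := by
            have := (List.nodup_cons.1 hnd).2
            rw [List.map_append, List.map_cons] at this
            exact (List.nodup_append.1 this).2.1
          exact hga ▸ h2
    · refine ⟨f :: p, hsub.cons₂ f, ⟨hs, hwp⟩, ?_⟩
      rw [List.map_cons]
      exact List.nodup_cons.2 ⟨ha, hnd⟩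

lemma circuit_of_edge_path {u : V} {f : E} {p : List E} (hs : G.s f = u)
    (hw : IsDirWalk G (G.t f) p u) (hnd : (G.t f :: p.map G.t).Nodup) :
    IsDirCircuit G u (f :: p) := by
  have h1 := List.nodup_cons.1 hnd
  refine ⟨List.cons_ne_nil _ _, ⟨hs, hw⟩, by simpa using hnd, ?_⟩
  exact List.nodup_cons.2 ⟨fun hf => h1.1 (List.mem_map_of_mem hf), h1.2.of_map _⟩

lemma circuit_rotate {v₀ u : V} {lc : List E} (hc : IsDirCircuit G v₀ lc)
    (hu : u ∈ lc.map G.t) :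
    ∃ lc', IsDirCircuit G u lc' ∧ (∀ x, x ∈ lc'.map G.t ↔ x ∈ lc.map G.t) ∧
      (∀ g, g ∈ lc' ↔ g ∈ lc) := by
  obtain ⟨g, hg, hgt⟩ := List.mem_map.1 hu
  obtain ⟨x, y, hxy⟩ := List.append_of_mem hg
  obtain ⟨hne, hw, hvnd, hednd⟩ := hc
  rw [hxy] at hw
  obtain ⟨m, hm1, hm2⟩ := walk_split hw
  obtain ⟨hsg, hwy⟩ := hm2
  have hperm : (y ++ (x ++ [g])).Perm lc := by
    rw [hxy]
    refine (List.perm_append_comm).trans ?_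
    simp
  refine ⟨y ++ (x ++ [g]), ⟨by simp, ?_, ?_, ?_⟩, ?_, ?_⟩
  · exact walk_append (hgt ▸ hwy) (walk_append hm1 ⟨hsg, hgt⟩)
  · exact ((hperm.map G.t).nodup_iff).2 hvnd
  · exact (hperm.nodup_iff).2 hednd
  · exact fun xx => (hperm.map G.t).mem_iff
  · exact fun gg => hperm.mem_iff

lemma bd_apply (G : Digraph' V E) (γ : EuclideanSpace ℝ E) (v : V) :
    bd G γ v = ∑ e, ((if G.s e = v then (1:ℝ) else 0) - (if G.t e = v then 1 else 0)) * γ e := by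
  simp [bd, Matrix.toEuclideanLin, Matrix.mulVec, dotProduct]

lemma ker_const_step {γ : EuclideanSpace ℝ E} (hγ : γ ∈ LinearMap.ker (bd G))
    (hsinj : ∀ e₁ e₂ : E, G.s e₁ = G.s e₂ → e₁ = e₂)
    (htinj : ∀ e₁ e₂ : E, G.t e₁ = G.t e₂ → e₁ = e₂)
    {f g : E} (hfg : G.s g = G.t f) : γ g = γ f := by
  have h0 : bd G γ (G.t f) = 0 := by
    rw [LinearMap.mem_ker] at hγ
    rw [hγ]; rfl
  rw [bd_apply] at h0
  have h1 : ∑ e, (if G.s e = G.t f then (1:ℝ) else 0) * γ e = γ g := by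
    rw [Finset.sum_eq_single g]
    · rw [if_pos hfg, one_mul]
    · intro e _ hne
      rw [if_neg, zero_mul]
      intro hse
      exact hne (hsinj e g (hse.trans hfg.symm))
    · intro h; exact absurd (Finset.mem_univ g) h
  have h2 : ∑ e, (if G.t e = G.t f then (1:ℝ) else 0) * γ e = γ f := by
    rw [Finset.sum_eq_single f]
    · rw [if_pos rfl, one_mul]
    · intro e _ hne
      rw [if_neg, zero_mul]
      intro hte
      exact hne (htinj e f hte)
    · intro h; exact absurd (Finset.mem_univ f) h
  simp only [sub_mul] at h0
  rw [Finset.sum_sub_distrib, h1, h2, sub_eq_zero] at h0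
  exact h0

lemma ker_const_chain {γ : EuclideanSpace ℝ E}
    (K : ∀ f g : E, G.s g = G.t f → γ g = γ f) :
    ∀ {l : List E} {a b : V} {f : E}, IsDirWalk G a l b → G.t f = a →
      ∀ g ∈ l, γ g = γ f := by
  intro l
  induction l with
  | nil => intro a b f _ _ g hg; cases hg
  | cons h rest ih =>
    intro a b f hw hf g hg
    obtain ⟨hs, hw'⟩ := hw
    rcases List.mem_cons.1 hg with rfl | hg
    · exact K f g (hs.trans hf.symm)
    · exact (ih hw' rfl g hg).trans (K f h (hs.trans hf.symm))

lemma finrank_le_one_of_all_edges {v₀ : V} {lc : List E} (hc : IsDirCircuit G v₀ lc)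
    (hall : ∀ e : E, e ∈ lc) : Module.finrank ℝ (LinearMap.ker (bd G)) ≤ 1 := by
  obtain ⟨hne, hw, hvnd, hednd⟩ := hc
  have htinj : ∀ e₁ e₂ : E, G.t e₁ = G.t e₂ → e₁ = e₂ := fun e₁ e₂ h =>
    List.inj_on_of_nodup_map hvnd (hall e₁) (hall e₂) h
  have htl := walk_tlist_eq hw hne
  have hmapt_ne : lc.map G.t ≠ [] := by simpa using hne
  have hdl : (v₀ :: lc.map G.t).dropLast = v₀ :: (lc.map G.t).dropLast := by
    obtain ⟨z, zs, hz⟩ := List.exists_cons_of_ne_nil hmapt_ne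
    rw [hz, List.dropLast_cons₂]
  have hmaps : lc.map G.s = v₀ :: (lc.map G.t).dropLast := by
    have : ∀ (l : List E) (a b : V), IsDirWalk G a l b →
        l.map G.s = (a :: l.map G.t).dropLast := by
      intro l
      induction l with
      | nil => intro a b _; simp
      | cons f rest ih =>
        intro a b h
        obtain ⟨hs, hw'⟩ := h
        rw [List.map_cons, List.map_cons, List.dropLast_cons₂, hs]
        exact congrArg _ (ih _ _ hw')
    rw [this lc v₀ v₀ hw, hdl]
  have hv0nd : v₀ ∉ (lc.map G.t).dropLast := by
    have := hvnd
    rw [htl, List.nodup_append] at this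
    intro hmem
    exact this.2.2 _ hmem _ (List.mem_singleton_self _) rfl
  have hsnd : (lc.map G.s).Nodup := by
    rw [hmaps]
    exact List.nodup_cons.2 ⟨hv0nd, (List.dropLast_sublist _).nodup hvnd⟩
  have hsinj : ∀ e₁ e₂ : E, G.s e₁ = G.s e₂ → e₁ = e₂ := fun e₁ e₂ h =>
    List.inj_on_of_nodup_map hsnd (hall e₁) (hall e₂) h
  obtain ⟨e₀, rest, rfl⟩ := List.exists_cons_of_ne_nil hne
  have hxne : (WithLp.toLp 2 (fun _ => (1:ℝ)) : EuclideanSpace ℝ E) ≠ 0 := by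
    intro h
    have := congrArg (fun x : EuclideanSpace ℝ E => x e₀) h
    simp at this
  have hker : LinearMap.ker (bd G) ≤ Submodule.span ℝ {(WithLp.toLp 2 (fun _ => (1:ℝ)) : EuclideanSpace ℝ E)} := by
    intro γ hγ
    have K : ∀ f g : E, G.s g = G.t f → γ g = γ f := fun f g hfg =>
      ker_const_step hγ hsinj htinj hfg
    have hconst : ∀ e : E, γ e = γ e₀ := by
      intro e
      rcases List.mem_cons.1 (hall e) with rfl | he
      · rfl
      · exact ker_const_chain K hw.2 rfl e he
    rw [Submodule.mem_span_singleton]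
    refine ⟨γ e₀, ?_⟩
    ext e
    simp [hconst e]
  calc Module.finrank ℝ (LinearMap.ker (bd G))
      ≤ Module.finrank ℝ (Submodule.span ℝ {(WithLp.toLp 2 (fun _ => (1:ℝ)) : EuclideanSpace ℝ E)}) :=
        Submodule.finrank_mono hker
    _ = 1 := finrank_span_singleton hxne

lemma last_touch {P : V → Prop} : ∀ {l : List E} {a c : V}, IsDirWalk G a l c →
    (∃ a' m', P a' ∧ IsDirWalk G a' m' c ∧ ∀ x ∈ m'.map G.t, ¬ P x)
    ∨ (∀ x ∈ a :: l.map G.t, ¬ P x) := by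
  intro l
  induction l with
  | nil =>
    intro a c h
    by_cases pa : P a
    · exact Or.inl ⟨a, [], pa, h, by simp⟩
    · refine Or.inr ?_
      intro x hx
      rcases List.mem_cons.1 hx with rfl | hx
      · exact pa
      · cases hx
  | cons f rest ih =>
    intro a c h
    obtain ⟨hs, hw⟩ := h
    rcases ih hw with hL | hall
    · exact Or.inl hL
    · by_cases pa : P a
      · exact Or.inl ⟨a, f :: rest, pa, ⟨hs, hw⟩, by
          rw [List.map_cons]; exact hall⟩
      · refine Or.inr ?_
        intro x hx
        rcases List.mem_cons.1 hx with rfl | hx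
        · exact pa
        · exact hall x (by rwa [List.map_cons] at hx)

lemma first_touch {P : V → Prop} : ∀ {l : List E} {a c : V}, IsDirWalk G a l c → P c →
    ∃ b' m', P b' ∧ IsDirWalk G a m' b' ∧
      ∀ x ∈ (a :: m'.map G.t).dropLast, ¬ P x := by
  intro l
  induction l with
  | nil =>
    intro a c h pc
    have : a = c := h
    subst this
    exact ⟨a, [], pc, rfl, by simp⟩
  | cons f rest ih =>
    intro a c h pc
    obtain ⟨hs, hw⟩ := h
    by_cases pa : P a
    · exact ⟨a, [], pa, rfl, by simp⟩
    · obtain ⟨b', m'', pb, hwm, hdrop⟩ := ih hw pc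
      refine ⟨b', f :: m'', pb, ⟨hs, hwm⟩, ?_⟩
      intro x hx
      rw [List.map_cons, List.dropLast_cons₂] at hx
      rcases List.mem_cons.1 hx with rfl | hx
      · exact pa
      · exact hdrop x hx

end Digraph'


open Digraph' in
theorem stmt13 {V E : Type} [Fintype V] [Fintype E] [DecidableEq V] [DecidableEq E]
    (G : Digraph' V E) (hsc : StronglyConnected G)
    (hdim : 2 ≤ Module.finrank ℝ (LinearMap.ker (bd G))) :
    (∃ (v₀ : V) (l₁ l₂ : List E),
        IsDirCircuit G v₀ l₁ ∧ IsDirCircuit G v₀ l₂ ∧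
        (∀ v : V, v ∈ l₁.map G.t → v ∈ l₂.map G.t → v = v₀) ∧
        (∀ e : E, e ∈ l₁ → e ∉ l₂)) ∨
    (∃ (u w : V) (p₁ p₂ p₃ : List E), u ≠ w ∧
        IsDirWalk G w p₁ u ∧ (w :: p₁.map G.t).Nodup ∧
        IsDirWalk G u p₂ w ∧ (u :: p₂.map G.t).Nodup ∧
        IsDirWalk G u p₃ w ∧ (u :: p₃.map G.t).Nodup ∧
        (∀ v : V, v ∈ w :: p₁.map G.t → v ∈ u :: p₂.map G.t → v = u ∨ v = w) ∧
        (∀ v : V, v ∈ w :: p₁.map G.t → v ∈ u :: p₃.map G.t → v = u ∨ v = w) ∧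
        (∀ v : V, v ∈ u :: p₂.map G.t → v ∈ u :: p₃.map G.t → v = u ∨ v = w) ∧
        (∀ e : E, e ∈ p₁ → e ∉ p₂) ∧ (∀ e : E, e ∈ p₁ → e ∉ p₃) ∧
        (∀ e : E, e ∈ p₂ → e ∉ p₃)) := by
  classical
  have hEle : Module.finrank ℝ (LinearMap.ker (bd G)) ≤ Fintype.card E := by
    have h1 := Submodule.finrank_le (LinearMap.ker (bd G))
    simpa [finrank_euclideanSpace] using h1
  have hEpos : 0 < Fintype.card E := by omega
  obtain ⟨e₀⟩ := Fintype.card_pos_iff.1 hEpos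
  obtain ⟨m0, hm0⟩ := dirReach_walk (hsc (G.t e₀) (G.s e₀))
  obtain ⟨p0, _, hp0w, hp0nd⟩ := walk_to_path hm0
  obtain ⟨v₀, lc, hc⟩ : ∃ v₀ lc, IsDirCircuit G v₀ lc :=
    ⟨_, _, circuit_of_edge_path rfl hp0w hp0nd⟩
  obtain ⟨e', he'⟩ : ∃ e', e' ∉ lc := by
    by_contra h
    push_neg at h
    have := finrank_le_one_of_all_edges hc h
    omega
  have hv₀ : v₀ ∈ lc.map G.t := by
    rw [walk_tlist_eq hc.2.1 hc.1]
    simp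
  have hsrc : ∀ g ∈ lc, G.s g ∈ lc.map G.t := by
    intro g hg
    rcases List.mem_cons.1 (walk_src_mem hc.2.1 hg) with h | h
    · rw [h]; exact hv₀
    · exact h
  obtain ⟨w₁, hw₁⟩ := dirReach_walk (hsc v₀ (G.s e'))
  obtain ⟨w₂, hw₂⟩ := dirReach_walk (hsc (G.t e') v₀)
  obtain ⟨a', m₁, ha', hwm₁, hm₁t⟩ :=
    (last_touch (P := fun v => v ∈ lc.map G.t) hw₁).resolve_right
      (fun hbad => hbad v₀ (List.mem_cons_self) hv₀)
  obtain ⟨b', m₂, hb', hwm₂, hm₂d⟩ :=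
    first_touch (P := fun v => v ∈ lc.map G.t) hw₂ hv₀
  have hwq : IsDirWalk G a' (m₁ ++ e' :: m₂) b' := walk_append hwm₁ ⟨rfl, hwm₂⟩
  have hqne : (m₁ ++ e' :: m₂) ≠ [] := by simp
  have hQtl := walk_tlist_eq hwq hqne
  have hQdrop : ∀ x ∈ ((m₁ ++ e' :: m₂).map G.t).dropLast, x ∉ lc.map G.t := by
    rw [List.map_append, List.map_cons,
      List.dropLast_append_of_ne_nil (List.cons_ne_nil _ _)]
    intro x hx
    rcases List.mem_append.1 hx with h | h
    · exact hm₁t x h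
    · exact hm₂d x h
  have F2 : ∀ x ∈ (m₁ ++ e' :: m₂).map G.t, x ∈ lc.map G.t → x = b' := by
    intro x hx hxC
    rw [hQtl] at hx
    rcases List.mem_append.1 hx with h | h
    · exact absurd hxC (hQdrop x h)
    · exact List.mem_singleton.1 h
  have F3 : ∀ g ∈ m₁ ++ e' :: m₂, g ∉ lc := by
    intro g hg hglc
    rcases List.mem_append.1 hg with h | h
    · exact hm₁t _ (List.mem_map_of_mem h) (List.mem_map_of_mem hglc)
    · rcases List.mem_cons.1 h with rfl | h
      · exact he' hglc
      · exact hm₂d _ (walk_src_mem_dropLast hwm₂ h) (hsrc g hglc)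
  by_cases hab : a' = b'
  · -- case (a): two circuits meeting at one vertex
    obtain ⟨lc', hc', hviff, heiff⟩ := circuit_rotate hc ha'
    obtain ⟨f, q', hq⟩ := List.exists_cons_of_ne_nil hqne
    have hwq' : IsDirWalk G a' (f :: q') b' := hq ▸ hwq
    obtain ⟨hsf, hwq''⟩ := hwq'
    obtain ⟨p, hpsub, hpw, hpnd⟩ := walk_to_path hwq''
    have hpw' : IsDirWalk G (G.t f) p a' := hab ▸ hpw
    have hmemq : ∀ g ∈ f :: p, g ∈ m₁ ++ e' :: m₂ := by
      intro g hg
      rw [hq]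
      rcases List.mem_cons.1 hg with rfl | hg
      · exact List.mem_cons_self
      · exact List.mem_cons_of_mem _ (hpsub.subset hg)
    refine Or.inl ⟨a', f :: p, lc', circuit_of_edge_path hsf hpw' hpnd, hc', ?_, ?_⟩
    · intro v hv1 hv2
      have hvq : v ∈ (m₁ ++ e' :: m₂).map G.t := by
        obtain ⟨g, hg, rfl⟩ := List.mem_map.1 hv1
        exact List.mem_map_of_mem (hmemq g hg)
      exact (F2 v hvq ((hviff v).1 hv2)).trans hab.symm
    · intro g hg hg2
      exact F3 g (hmemq g hg) ((heiff g).1 hg2)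
  · -- case (b): theta subgraph
    obtain ⟨lc', hc', hviff, heiff⟩ := circuit_rotate hc ha'
    have hb'mem : b' ∈ lc'.map G.t := (hviff b').2 hb'
    obtain ⟨g, hg, hgt⟩ := List.mem_map.1 hb'mem
    obtain ⟨x, y, hxy⟩ := List.append_of_mem hg
    obtain ⟨hne', hw', hvnd', hednd'⟩ := hc'
    rw [hxy] at hw' hvnd' hednd'
    obtain ⟨m, hwx, hm2⟩ := walk_split hw'
    obtain ⟨hsg, hwy⟩ := hm2
    have hwr₁ : IsDirWalk G a' (x ++ [g]) b' := walk_append hwx ⟨hsg, hgt⟩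
    have hwr₂ : IsDirWalk G b' y a' := hgt ▸ hwy
    have hyne : y ≠ [] := by
      intro h
      subst h
      have h0 : G.t g = a' := hwy
      exact hab (by rw [← hgt, h0])
    have hr₁map : (x ++ [g]).map G.t = x.map G.t ++ [G.t g] := by simp
    have hmapsplit : (x ++ g :: y).map G.t = (x.map G.t ++ [G.t g]) ++ y.map G.t := by
      simp
    rw [hmapsplit] at hvnd'
    have hnd1 := (List.nodup_append.1 hvnd').1
    have hnd2 := (List.nodup_append.1 hvnd').2.1
    have hdisj := (List.nodup_append.1 hvnd').2.2
    have ha'y : a' ∈ y.map G.t := by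
      rw [walk_tlist_eq hwr₂ hyne]
      simp
    have hnd₁' : (a' :: (x ++ [g]).map G.t).Nodup := by
      rw [hr₁map]
      refine List.nodup_cons.2 ⟨?_, hnd1⟩
      intro hmem
      exact hdisj _ hmem _ ha'y rfl
    have hnd₂' : (b' :: y.map G.t).Nodup := by
      refine List.nodup_cons.2 ⟨?_, hnd2⟩
      intro hmem
      refine hdisj _ ?_ _ hmem rfl
      rw [← hgt]
      exact List.mem_append_right _ (List.mem_singleton_self _)
    obtain ⟨p, hpsub, hpw, hpnd⟩ := walk_to_path hwq
    have hpC : ∀ v ∈ p.map G.t, v ∈ lc.map G.t → v = b' := by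
      intro v hv
      exact F2 v ((hpsub.map G.t).subset hv)
    have hsub₁ : ∀ v ∈ (x ++ [g]).map G.t, v ∈ lc.map G.t := by
      intro v hv
      refine (hviff v).1 ?_
      rw [hxy, List.map_append, List.map_cons]
      rw [hr₁map] at hv
      rcases List.mem_append.1 hv with h | h
      · exact List.mem_append_left _ h
      · rw [List.mem_singleton] at h
        subst h
        exact List.mem_append_right _ (List.mem_cons_self)
    have hsub₂ : ∀ v ∈ y.map G.t, v ∈ lc.map G.t := by
      intro v hv
      refine (hviff v).1 ?_
      rw [hxy, List.map_append, List.map_cons]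
      exact List.mem_append_right _ (List.mem_cons_of_mem _ hv)
    have hedge₁ : ∀ e ∈ x ++ [g], e ∈ lc := by
      intro e he
      refine (heiff e).1 ?_
      rw [hxy]
      rcases List.mem_append.1 he with h | h
      · exact List.mem_append_left _ h
      · rw [List.mem_singleton] at h
        subst h
        exact List.mem_append_right _ (List.mem_cons_self)
    have hedge₂ : ∀ e ∈ y, e ∈ lc := by
      intro e he
      refine (heiff e).1 ?_
      rw [hxy]
      exact List.mem_append_right _ (List.mem_cons_of_mem _ he)
    have hpelc : ∀ e ∈ p, e ∉ lc := fun e he => F3 e (hpsub.subset he)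
    have hedisj : ∀ e ∈ y, e ∉ x ++ [g] := by
      intro e hey he1
      rw [List.nodup_append] at hednd'
      rcases List.mem_append.1 he1 with h | h
      · exact hednd'.2.2 _ h _ (List.mem_cons_of_mem _ hey) rfl
      · rw [List.mem_singleton] at h
        subst h
        exact (List.nodup_cons.1 hednd'.2.1).1 hey
    refine Or.inr ⟨a', b', y, x ++ [g], p, hab, hwr₂, hnd₂', hwr₁, hnd₁', hpw, hpnd,
      ?_, ?_, ?_, hedisj, ?_, ?_⟩
    · intro v hv1 hv2
      rcases List.mem_cons.1 hv1 with rfl | hv1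
      · exact Or.inr rfl
      rcases List.mem_cons.1 hv2 with rfl | hv2
      · exact Or.inl rfl
      exfalso
      rw [hr₁map] at hv2
      exact hdisj _ hv2 _ hv1 rfl
    · intro v hv1 hv2
      rcases List.mem_cons.1 hv1 with rfl | hv1
      · exact Or.inr rfl
      rcases List.mem_cons.1 hv2 with rfl | hv2
      · exact Or.inl rfl
      exact Or.inr (hpC v hv2 (hsub₂ v hv1))
    · intro v hv1 hv2
      rcases List.mem_cons.1 hv1 with rfl | hv1
      · exact Or.inl rfl
      rcases List.mem_cons.1 hv2 with rfl | hv2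
      · exact Or.inl rfl
      exact Or.inr (hpC v hv2 (hsub₁ v hv1))
    · intro e he hp
      exact hpelc e hp (hedge₂ e he)
    · intro e he hp
      exact hpelc e hp (hedge₁ e he)
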